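/- Let m₀ = 2k ≥ 4 be even, θᵢ ∈ {±1} with θ_l ≠ θ_{m(l)}, and p_{m₀}(u) = (Σᵢθᵢuᵢ²)^k. Then the polynomial Σ_{|β|=m₀−2} [(θ^β u^{β+e_{m(l)}}/β!)(∂_{β+e_l}p_{m₀})(u) − (θ^β u^{β+e_l}/β!)(∂_{β+e_{m(l)}}p_{m₀})(u)] is not identically zero; in fact the monomial u^{m₀e_l − e_l + e_{m(l)}} appears in it with coefficient θ_l^k·[m₀ − θ_lθ_{m(l)}m₀] = 2m₀θ_l^k ≠ 0. -/

import Mathlib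

open MvPolynomial

/-- Multi-index partial derivative `∂_α p` of a multivariate polynomial. -/
noncomputable def mderiv {n : ℕ} (α : Fin n → ℕ) (p : MvPolynomial (Fin n) ℝ) :
    MvPolynomial (Fin n) ℝ :=
  (List.finRange n).foldr (fun i q => (fun r => MvPolynomial.pderiv i r)^[α i] q) p

/-- `α! = ∏ᵢ (αᵢ)!` for a multi-index. -/
def mfact {n : ℕ} (α : Fin n → ℕ) : ℕ := ∏ i, (α i).factorial

/-- `|α| = Σᵢ αᵢ` for a multi-index. -/
def mdeg {n : ℕ} (α : Fin n → ℕ) : ℕ := ∑ i, α i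

/-- The monomial `w^α = ∏ᵢ wᵢ^{αᵢ}` as a polynomial. -/
noncomputable def monX {n : ℕ} (α : Fin n → ℕ) : MvPolynomial (Fin n) ℝ :=
  ∏ i, (X i : MvPolynomial (Fin n) ℝ) ^ α i

/-- The polynomial `B_{j,γ}` attached to `p` and a distinguished coordinate `l`:
`B_{j,γ}(w) = Σ_{α≤γ} (-1)^{|α|}/(α!(γ−α)!) (∂_{(α;|γ−α|)}p)(w)·w^{(γ−α;|α|)}`,
where multi-indices `γ, α` satisfy `γ l = 0` and `(β;k)` inserts `k` in the
`l`-th coordinate (realized here by `Function.update`). -/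
noncomputable def Bpoly {n : ℕ} (l : Fin n) (γ : Fin n → ℕ)
    (p : MvPolynomial (Fin n) ℝ) : MvPolynomial (Fin n) ℝ :=
  ∑ α ∈ Finset.Iic γ,
    (C ((-1 : ℝ) ^ (mdeg α) / ((mfact α : ℝ) * (mfact (γ - α) : ℝ))) :
        MvPolynomial (Fin n) ℝ) *
      mderiv (Function.update α l (mdeg (γ - α))) p *
      monX (Function.update (γ - α) l (mdeg α))

section AuxPart1
namespace Stmt18Aux

variable {n : ℕ}

noncomputable def toF (α : Fin n → ℕ) : Fin n →₀ ℕ := ∑ i, Finsupp.single i (α i)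

lemma toF_apply' (α : Fin n → ℕ) (j : Fin n) : toF α j = α j := by
  classical
  simp [toF, Finsupp.finset_sum_apply, Finsupp.single_apply]

lemma coeff_pderiv (i : Fin n) (q : MvPolynomial (Fin n) ℝ) (τ : Fin n →₀ ℕ) :
    coeff τ (pderiv i q) = (τ i + 1) * coeff (τ + Finsupp.single i 1) q := by
  induction q using MvPolynomial.induction_on' with
  | monomial s a =>
    rw [pderiv_monomial, coeff_monomial, coeff_monomial]
    by_cases h : s = τ + Finsupp.single i 1
    · subst h
      rw [if_pos (add_tsub_cancel_right _ _), if_pos rfl]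
      simp [mul_comm]
    · rw [if_neg h, mul_zero]
      split_ifs with h2
      · rcases Nat.eq_zero_or_pos (s i) with h3 | h3
        · simp [h3]
        · exact absurd (by rw [← h2]; exact
            (tsub_add_cancel_of_le (Finsupp.single_le_iff.mpr h3)).symm) h
      · rfl
  | add p q ihp ihq => simp [map_add, coeff_add, ihp, ihq, mul_add]

lemma desc_step (a j : ℕ) :
    (a + (j + 1)).descFactorial (j + 1) = (a + 1) * ((a + 1) + j).descFactorial j := by
  induction j generalizing a with
  | zero => simp
  | succ j ih =>
    have h1 : a + (j + 2) = (a + (j + 1)) + 1 := by ring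
    have h2 : (a + 1) + (j + 1) = (a + (j + 1)) + 1 := by ring
    rw [h1, Nat.succ_descFactorial_succ, ih a, h2, Nat.succ_descFactorial_succ]
    have h3 : a + 1 + j = a + (j + 1) := by ring
    rw [h3]
    ring

lemma coeff_pderiv_iterate (i : Fin n) (j : ℕ) (q : MvPolynomial (Fin n) ℝ) (τ : Fin n →₀ ℕ) :
    coeff τ ((fun r => pderiv i r)^[j] q)
      = (τ i + j).descFactorial j * coeff (τ + Finsupp.single i j) q := by
  induction j generalizing τ with
  | zero => simp
  | succ j ih =>
    rw [Function.iterate_succ_apply', coeff_pderiv, ih]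
    have h1 : (τ + Finsupp.single i (1:ℕ)) i = τ i + 1 := by
      rw [Finsupp.add_apply, Finsupp.single_eq_same]
    have h2 : τ + Finsupp.single i 1 + Finsupp.single i j = τ + Finsupp.single i (j + 1) := by
      rw [add_assoc, ← Finsupp.single_add, add_comm 1 j]
    rw [h1, h2, desc_step]
    push_cast
    ring

lemma coeff_foldr (α : Fin n → ℕ) (p : MvPolynomial (Fin n) ℝ) :
    ∀ (L : List (Fin n)), L.Nodup → ∀ τ : Fin n →₀ ℕ,
      coeff τ (L.foldr (fun i q => (fun r => pderiv i r)^[α i] q) p)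
        = (L.map (fun i => (τ i + α i).descFactorial (α i))).prod
            * coeff (τ + (L.map fun i => Finsupp.single i (α i)).sum) p := by
  intro L
  induction L with
  | nil => simp
  | cons i L ih =>
    intro hnd τ
    obtain ⟨hi, hnd'⟩ := List.nodup_cons.mp hnd
    rw [List.foldr_cons, coeff_pderiv_iterate, ih hnd' (τ + Finsupp.single i (α i))]
    have hmap : L.map (fun j => ((τ + Finsupp.single i (α i)) j + α j).descFactorial (α j))
        = L.map (fun j => (τ j + α j).descFactorial (α j)) := by
      refine List.map_congr_left fun j hj => ?_
      have : (Finsupp.single i (α i)) j = 0 :=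
        Finsupp.single_eq_of_ne (fun h => hi (h ▸ hj))
      simp [this]
    rw [hmap, List.map_cons, List.prod_cons, List.map_cons, List.sum_cons]
    push_cast
    rw [add_assoc]
    ring

lemma coeff_mderiv (α : Fin n → ℕ) (p : MvPolynomial (Fin n) ℝ) (τ : Fin n →₀ ℕ) :
    coeff τ (mderiv α p)
      = ((∏ i, (τ i + α i).descFactorial (α i) : ℕ) : ℝ) * coeff (τ + toF α) p := by
  rw [mderiv, coeff_foldr α p _ (List.nodup_finRange n) τ, toF, Fin.prod_univ_def,
    Fin.sum_univ_def]

lemma desc_pred : ∀ j : ℕ, (j + 1).descFactorial j = (j + 1).factorial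
  | 0 => rfl
  | j + 1 => by
    rw [Nat.succ_descFactorial_succ, desc_pred j]
    rfl

lemma monX_eq (α : Fin n → ℕ) : monX α = monomial (toF α) (1:ℝ) := by
  rw [toF, monomial_sum_index]
  simp [monX, X_pow_eq_monomial]

variable {l m : Fin n} (hml : m ≠ l)

include hml in
lemma toF_pair (a b : ℕ) :
    toF (fun i => if i = l then a else if i = m then b else 0)
      = Finsupp.single l a + Finsupp.single m b := by
  ext j
  rw [toF_apply', Finsupp.add_apply, Finsupp.single_apply, Finsupp.single_apply]
  by_cases h1 : j = l
  · subst h1; simp [hml]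
  · by_cases h2 : j = m
    · subst h2; simp [h1, Ne.symm h1]
    · simp [h1, h2, Ne.symm h1, Ne.symm h2]

include hml in
lemma toF_ite (a : ℕ) :
    toF (fun i => if i = l then a else 0) = Finsupp.single l a := by
  ext j
  rw [toF_apply', Finsupp.single_apply]
  by_cases h1 : j = l
  · subst h1; simp
  · simp [h1, Ne.symm h1]

include hml in
lemma pair_sub (a b c d : ℕ) :
    (Finsupp.single l a + Finsupp.single m b) - (Finsupp.single l c + Finsupp.single m d)
      = Finsupp.single l (a - c) + Finsupp.single m (b - d) := by
  ext j
  rw [Finsupp.tsub_apply]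
  simp only [Finsupp.add_apply, Finsupp.single_apply]
  by_cases h1 : l = j <;> by_cases h2 : m = j <;> simp_all

lemma coeff_Q_mul (θ : Fin n → ℝ) (q : MvPolynomial (Fin n) ℝ) (δ : Fin n →₀ ℕ) :
    coeff δ ((∑ i, C (θ i) * (X i : MvPolynomial (Fin n) ℝ) ^ 2) * q)
      = ∑ i, θ i * (if Finsupp.single i 2 ≤ δ then coeff (δ - Finsupp.single i 2) q else 0) := by
  rw [Finset.sum_mul, coeff_sum]
  refine Finset.sum_congr rfl fun i _ => ?_
  rw [mul_assoc, coeff_C_mul, X_pow_eq_monomial, coeff_monomial_mul']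
  split_ifs <;> simp

omit hml in
lemma coeff_Q_pow_1 (θ : Fin n → ℝ) :
    ∀ k : ℕ, coeff (Finsupp.single l (2 * k))
        ((∑ i, C (θ i) * (X i : MvPolynomial (Fin n) ℝ) ^ 2) ^ k) = θ l ^ k := by
  intro k
  induction k with
  | zero => simp
  | succ k ih =>
    rw [pow_succ', coeff_Q_mul]
    rw [Finset.sum_eq_single l]
    · have hle : Finsupp.single l 2 ≤ Finsupp.single l (2 * (k+1)) := by
        rw [Finsupp.single_le_iff, Finsupp.single_eq_same]; omega
      rw [if_pos hle]
      have hsub : Finsupp.single l (2 * (k+1)) - Finsupp.single l 2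
          = Finsupp.single l (2 * k) := by
        ext j
        rw [Finsupp.tsub_apply, Finsupp.single_apply, Finsupp.single_apply,
          Finsupp.single_apply]
        split_ifs <;> omega
      rw [hsub, ih, pow_succ]
      ring
    · intro i _ hil
      have : ¬ Finsupp.single i 2 ≤ Finsupp.single l (2 * (k+1)) := by
        rw [Finsupp.single_le_iff, Finsupp.single_apply, if_neg (fun h => hil h.symm)]
        omega
      rw [if_neg this, mul_zero]
    · intro h; exact absurd (Finset.mem_univ l) h

include hml in
lemma coeff_Q_pow_2 (θ : Fin n → ℝ) :
    ∀ k : ℕ, coeff (Finsupp.single l (2 * k) + Finsupp.single m 2)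
        ((∑ i, C (θ i) * (X i : MvPolynomial (Fin n) ℝ) ^ 2) ^ (k + 1))
      = (k + 1 : ℝ) * θ l ^ k * θ m := by
  intro k
  have hTapp : ∀ a b : ℕ, ∀ j : Fin n,
      (Finsupp.single l a + Finsupp.single m b) j
        = if j = l then a else if j = m then b else 0 := by
    intro a b j
    rw [Finsupp.add_apply, Finsupp.single_apply, Finsupp.single_apply]
    by_cases h1 : j = l
    · subst h1; simp [hml]
    · by_cases h2 : j = m
      · subst h2; simp [h1, Ne.symm h1]
      · simp [h1, h2, Ne.symm h1, Ne.symm h2]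
  induction k with
  | zero =>
    rw [pow_one, mul_zero, Finsupp.single_zero, zero_add, coeff_sum]
    rw [Finset.sum_eq_single m]
    · rw [coeff_C_mul, X_pow_eq_monomial, coeff_monomial, if_pos rfl]
      simp
    · intro i _ him
      rw [coeff_C_mul, X_pow_eq_monomial, coeff_monomial, if_neg, mul_zero]
      intro h
      rcases (Finsupp.single_eq_single_iff _ _ _ _).mp h with ⟨h1, _⟩ | ⟨h1, _⟩
      · exact him h1
      · omega
    · intro h; exact absurd (Finset.mem_univ m) h
  | succ k ih =>
    rw [pow_succ', coeff_Q_mul]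
    rw [Finset.sum_eq_add_of_mem l m (Finset.mem_univ l) (Finset.mem_univ m)
      (fun h => hml h.symm)]
    · have hle1 : Finsupp.single l 2 ≤ Finsupp.single l (2*(k+1)) + Finsupp.single m 2 := by
        rw [Finsupp.single_le_iff, hTapp, if_pos rfl]; omega
      have hle2 : Finsupp.single m 2 ≤ Finsupp.single l (2*(k+1)) + Finsupp.single m 2 := by
        rw [Finsupp.single_le_iff, hTapp, if_neg hml, if_pos rfl]
      rw [if_pos hle1, if_pos hle2]
      have hs1 : Finsupp.single l (2*(k+1)) + Finsupp.single m 2 - Finsupp.single l 2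
          = Finsupp.single l (2*k) + Finsupp.single m 2 := by
        have h := pair_sub hml (2*(k+1)) 2 2 0
        rw [Finsupp.single_zero, add_zero, Nat.sub_zero,
          show 2*(k+1) - 2 = 2*k from by omega] at h
        exact h
      have hs2 : Finsupp.single l (2*(k+1)) + Finsupp.single m 2 - Finsupp.single m 2
          = Finsupp.single l (2*(k+1)) := by
        have h := pair_sub hml (2*(k+1)) 2 0 2
        rw [Finsupp.single_zero, zero_add, Nat.sub_zero, Nat.sub_self,
          Finsupp.single_zero, add_zero] at h
        exact h
      rw [hs1, hs2, ih, coeff_Q_pow_1 θ (k+1)]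
      push_cast
      ring
    · intro i _ ⟨hil, him⟩
      have : ¬ Finsupp.single i 2 ≤ Finsupp.single l (2*(k+1)) + Finsupp.single m 2 := by
        rw [Finsupp.single_le_iff, hTapp, if_neg hil, if_neg him]
        omega
      rw [if_neg this, mul_zero]

omit hml in
lemma coeff_term (c : ℝ) (f1 g1 f2 g2 : Fin n → ℕ) (p : MvPolynomial (Fin n) ℝ)
    (T : Fin n →₀ ℕ) :
    coeff T (C c * (monX f1 * mderiv g1 p - monX f2 * mderiv g2 p))
      = c * ((if toF f1 ≤ T then
            ((∏ i, ((T - toF f1) i + g1 i).descFactorial (g1 i) : ℕ) : ℝ)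
              * coeff ((T - toF f1) + toF g1) p else 0)
         - (if toF f2 ≤ T then
            ((∏ i, ((T - toF f2) i + g2 i).descFactorial (g2 i) : ℕ) : ℝ)
              * coeff ((T - toF f2) + toF g2) p else 0)) := by
  rw [coeff_C_mul, coeff_sub, monX_eq, monX_eq, coeff_monomial_mul', coeff_monomial_mul']
  by_cases h1 : toF f1 ≤ T <;> by_cases h2 : toF f2 ≤ T <;>
    simp [h1, h2, coeff_mderiv]

end Stmt18Aux
end AuxPart1

open Stmt18Aux in
/-- For `m₀ = 2k ≥ 4`, `θᵢ ∈ {±1}` with `θ_l ≠ θ_m`, and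
`p_{m₀}(u) = (Σᵢθᵢuᵢ²)^k`, the polynomial
`R = Σ_{|β|=m₀−2}[(θ^β u^{β+e_m}/β!)(∂_{β+e_l}p_{m₀})(u) −
(θ^β u^{β+e_l}/β!)(∂_{β+e_m}p_{m₀})(u)]`
is not identically zero; in fact the monomial `u^{m₀e_l−e_l+e_m}` appears in
`R` with coefficient `θ_l^k·[m₀ − θ_lθ_m·m₀] = 2m₀θ_l^k ≠ 0`. -/
theorem stmt_18 {n : ℕ} (hn : 2 ≤ n) (θ : Fin n → ℝ) (hθ : ∀ i, θ i = 1 ∨ θ i = -1)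
    (l m : Fin n) (hlm : m ≠ l) (hθlm : θ l ≠ θ m) (k : ℕ) (hk : 2 ≤ k)
    (p R : MvPolynomial (Fin n) ℝ)
    (hp : p = (∑ i, C (θ i) * (X i : MvPolynomial (Fin n) ℝ) ^ 2) ^ k)
    (hR : R = ∑ β ∈ Finset.Nat.antidiagonalTuple n (2 * k - 2),
      (C ((∏ i, θ i ^ β i) / (mfact β : ℝ)) : MvPolynomial (Fin n) ℝ) *
        (monX (fun i => β i + if i = m then 1 else 0) *
            mderiv (fun i => β i + if i = l then 1 else 0) p
         - monX (fun i => β i + if i = l then 1 else 0) *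
            mderiv (fun i => β i + if i = m then 1 else 0) p)) :
    MvPolynomial.coeff (Finsupp.single l (2 * k - 1) + Finsupp.single m 1) R
        = θ l ^ k * ((2 * k : ℕ) - θ l * θ m * (2 * k : ℕ))
    ∧ R ≠ 0 := by
  classical
  obtain ⟨j, rfl⟩ : ∃ j, k = j + 2 := ⟨k - 2, by omega⟩
  have hlm' : l ≠ m := fun h => hlm h.symm
  have hl2 : θ l ^ 2 = 1 := by rcases hθ l with h | h <;> rw [h] <;> norm_num
  have hlne : θ l ≠ 0 := by rcases hθ l with h | h <;> rw [h] <;> norm_num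
  set T : Fin n →₀ ℕ := Finsupp.single l (2*j+3) + Finsupp.single m 1 with hTdef
  have hTapp : ∀ i : Fin n, T i = if i = l then 2*j+3 else if i = m then 1 else 0 := by
    intro i
    rw [hTdef, Finsupp.add_apply, Finsupp.single_apply, Finsupp.single_apply]
    by_cases h1 : i = l
    · subst h1; simp [hlm]
    · by_cases h2 : i = m
      · subst h2; simp [h1, Ne.symm h1]
      · simp [h1, h2, Ne.symm h1, Ne.symm h2]
  -- the two relevant multi-indices
  set χ₁ : Fin n → ℕ := fun i => if i = l then 2*j+2 else 0 with hχ₁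
  set χ₂ : Fin n → ℕ := fun i => if i = l then 2*j+1 else if i = m then 1 else 0 with hχ₂
  have hmem1 : χ₁ ∈ Finset.Nat.antidiagonalTuple n (2*(j+2) - 2) := by
    rw [Finset.Nat.mem_antidiagonalTuple]
    rw [hχ₁, Finset.sum_ite_eq' Finset.univ l fun _ => 2*j+2]
    simp; omega
  have hmem2 : χ₂ ∈ Finset.Nat.antidiagonalTuple n (2*(j+2) - 2) := by
    rw [Finset.Nat.mem_antidiagonalTuple]
    rw [Finset.sum_eq_add_of_mem l m (Finset.mem_univ l) (Finset.mem_univ m) hlm'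
      (fun c _ hc => by simp [hχ₂, hc.1, hc.2])]
    simp [hχ₂, hlm]; omega
  have hne12 : χ₁ ≠ χ₂ := by
    intro h
    have := congrFun h m
    simp [hχ₁, hχ₂, hlm] at this
  -- vanishing of all other terms
  have hvanish : ∀ β ∈ Finset.Nat.antidiagonalTuple n (2*(j+2) - 2), β ≠ χ₁ ∧ β ≠ χ₂ →
      coeff T ((C ((∏ i, θ i ^ β i) / (mfact β : ℝ)) : MvPolynomial (Fin n) ℝ) *
        (monX (fun i => β i + if i = m then 1 else 0) *
            mderiv (fun i => β i + if i = l then 1 else 0) p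
         - monX (fun i => β i + if i = l then 1 else 0) *
            mderiv (fun i => β i + if i = m then 1 else 0) p)) = 0 := by
    intro β hβ hb
    obtain ⟨hb1, hb2⟩ := hb
    have hsum : ∑ i, β i = 2*j+2 := by
      have := Finset.Nat.mem_antidiagonalTuple.mp hβ
      omega
    rw [coeff_term]
    have h1 : ¬ toF (fun i => β i + if i = m then 1 else 0) ≤ T := by
      intro hle
      have happ : ∀ i, β i + (if i = m then 1 else 0) ≤ T i := fun i => by
        have h := Finsupp.le_def.mp hle i
        rwa [toF_apply'] at h
      have hz : ∀ i, i ≠ l → β i = 0 := by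
        intro i hi
        have h := happ i
        rw [hTapp i, if_neg hi] at h
        by_cases him : i = m
        · rw [if_pos him] at h; omega
        · rw [if_neg him] at h; omega
      have hβl : β l = 2*j+2 := by
        rw [← hsum, Finset.sum_eq_single l (fun i _ hi => hz i hi)
          (fun h => absurd (Finset.mem_univ l) h)]
      refine hb1 (funext fun i => ?_)
      by_cases hi : i = l
      · subst hi; simp [hχ₁, hβl]
      · simp [hχ₁, hi, hz i hi]
    have h2 : ¬ toF (fun i => β i + if i = l then 1 else 0) ≤ T := by
      intro hle
      have happ : ∀ i, β i + (if i = l then 1 else 0) ≤ T i := fun i => by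
        have h := Finsupp.le_def.mp hle i
        rwa [toF_apply'] at h
      have hz : ∀ i, i ≠ l → i ≠ m → β i = 0 := by
        intro i hi him
        have h := happ i
        rw [hTapp i] at h
        simp [hi, him] at h
        omega
      have hm1 : β m ≤ 1 := by
        have h := happ m
        rw [hTapp m] at h
        simp [hlm] at h
        omega
      have hsum2 : β l + β m = 2*j+2 := by
        rw [← hsum, Finset.sum_eq_add_of_mem l m (Finset.mem_univ l) (Finset.mem_univ m) hlm'
          (fun c _ hc => hz c hc.1 hc.2)]
      have hcase : β m = 0 ∨ β m = 1 := by omega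
      rcases hcase with h0 | h0
      · refine hb1 (funext fun i => ?_)
        by_cases hi : i = l
        · subst hi; simp only [hχ₁, if_pos rfl]; omega
        · by_cases him : i = m
          · subst him; simp [hχ₁, hi, h0]
          · simp [hχ₁, hi, hz i hi him]
      · refine hb2 (funext fun i => ?_)
        by_cases hi : i = l
        · subst hi; simp only [hχ₂, if_pos rfl]; omega
        · by_cases him : i = m
          · subst him; simp [hχ₂, hi, h0]
          · simp [hχ₂, hi, him, hz i hi him]
    rw [if_neg h1, if_neg h2]
    ring
  -- normalizations of the shifted multi-indices
  have ef1 : ∀ i, χ₁ i + (if i = m then 1 else 0)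
      = if i = l then 2*j+2 else if i = m then 1 else 0 := by
    intro i
    by_cases hi : i = l
    · subst hi; simp [hχ₁, hlm']
    · by_cases him : i = m
      · subst him; simp [hχ₁, hi]
      · simp [hχ₁, hi, him]
  have ef2 : ∀ i, χ₁ i + (if i = l then 1 else 0)
      = if i = l then 2*j+3 else 0 := by
    intro i
    by_cases hi : i = l
    · subst hi; simp [hχ₁]
    · simp [hχ₁, hi]
  have ef3 : ∀ i, χ₂ i + (if i = m then 1 else 0)
      = if i = l then 2*j+1 else if i = m then 2 else 0 := by
    intro i
    by_cases hi : i = l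
    · subst hi; simp [hχ₂, hlm']
    · by_cases him : i = m
      · subst him; simp [hχ₂, hi]
      · simp [hχ₂, hi, him]
  have ef4 : ∀ i, χ₂ i + (if i = l then 1 else 0)
      = if i = l then 2*j+2 else if i = m then 1 else 0 := by
    intro i
    by_cases hi : i = l
    · subst hi; simp [hχ₂]
    · by_cases him : i = m
      · subst him; simp [hχ₂, hi]
      · simp [hχ₂, hi, him]
  -- conditions and subtractions
  have cond_a : Finsupp.single l (2*j+2) + Finsupp.single m 1 ≤ T := by
    rw [hTdef]
    exact add_le_add (Finsupp.single_le_single.mpr (by omega)) le_rfl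
  have sub_a : T - (Finsupp.single l (2*j+2) + Finsupp.single m 1) = Finsupp.single l 1 := by
    rw [hTdef, pair_sub hlm, show 2*j+3 - (2*j+2) = 1 from by omega, Nat.sub_self,
      Finsupp.single_zero, add_zero]
  have cond_b : Finsupp.single l (2*j+3) ≤ T := by
    rw [Finsupp.single_le_iff, hTapp, if_pos rfl]
  have sub_b : T - Finsupp.single l (2*j+3) = Finsupp.single m 1 := by
    rw [hTdef]
    have h := pair_sub hlm (2*j+3) 1 (2*j+3) 0
    rw [Finsupp.single_zero, add_zero, Nat.sub_self, Nat.sub_zero, Finsupp.single_zero,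
      zero_add] at h
    exact h
  have cond_c : ¬ (Finsupp.single l (2*j+1) + Finsupp.single m 2 ≤ T) := by
    intro h
    have h2 := Finsupp.le_def.mp h m
    rw [hTapp, Finsupp.add_apply, Finsupp.single_apply, Finsupp.single_apply,
      if_neg (fun hh : l = m => hlm' hh), if_pos rfl, if_neg hlm, if_pos rfl] at h2
    omega
  -- products of descending factorials
  have prod1 : (∏ i, ((Finsupp.single l (1:ℕ)) i + (if i = l then 2*j+3 else 0)).descFactorial
      (if i = l then 2*j+3 else 0)) = (2*j+4).descFactorial (2*j+3) := by
    rw [Finset.prod_eq_single l (fun i _ hi => by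
        rw [if_neg hi, Nat.descFactorial_zero])
      (fun h => absurd (Finset.mem_univ l) h)]
    rw [if_pos rfl, Finsupp.single_eq_same, show 1 + (2*j+3) = 2*j+4 from by omega]
  have prod2 : (∏ i, ((Finsupp.single m (1:ℕ)) i
        + (if i = l then 2*j+2 else if i = m then 1 else 0)).descFactorial
        (if i = l then 2*j+2 else if i = m then 1 else 0))
      = (2*j+2).factorial * 2 := by
    rw [Finset.prod_eq_mul_of_mem l m (Finset.mem_univ l) (Finset.mem_univ m) hlm'
      (fun c _ hc => by rw [if_neg hc.1, if_neg hc.2, Nat.descFactorial_zero])]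
    rw [if_pos rfl, if_neg hlm, if_pos rfl, Finsupp.single_eq_same,
      Finsupp.single_eq_of_ne hlm', zero_add, Nat.descFactorial_self, Nat.descFactorial_one]
  have prod3 : (∏ i, ((Finsupp.single l (1:ℕ)) i
        + (if i = l then 2*j+1 else if i = m then 2 else 0)).descFactorial
        (if i = l then 2*j+1 else if i = m then 2 else 0))
      = (2*j+2).descFactorial (2*j+1) * 2 := by
    rw [Finset.prod_eq_mul_of_mem l m (Finset.mem_univ l) (Finset.mem_univ m) hlm'
      (fun c _ hc => by rw [if_neg hc.1, if_neg hc.2, Nat.descFactorial_zero])]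
    rw [if_pos rfl, if_neg hlm, if_pos rfl, Finsupp.single_eq_same,
      Finsupp.single_eq_of_ne hlm, zero_add, show 1 + (2*j+1) = 2*j+2 from by omega,
      Nat.descFactorial_self, show Nat.factorial 2 = 2 from rfl]
  -- exponent bookkeeping
  have exp1 : Finsupp.single l (1:ℕ) + Finsupp.single l (2*j+3) = Finsupp.single l (2*j+4) := by
    rw [← Finsupp.single_add, show 1 + (2*j+3) = 2*j+4 from by omega]
  have exp2 : Finsupp.single m (1:ℕ) + (Finsupp.single l (2*j+2) + Finsupp.single m 1)
      = Finsupp.single l (2*j+2) + Finsupp.single m 2 := by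
    rw [add_left_comm, ← Finsupp.single_add, show (1:ℕ) + 1 = 2 from rfl]
  have exp3 : Finsupp.single l (1:ℕ) + (Finsupp.single l (2*j+1) + Finsupp.single m 2)
      = Finsupp.single l (2*j+2) + Finsupp.single m 2 := by
    rw [← add_assoc, ← Finsupp.single_add, show 1 + (2*j+1) = 2*j+2 from by omega]
  -- coefficients of p
  have cp1 : coeff (Finsupp.single l (2*j+4)) p = θ l ^ (j+2) := by
    rw [hp, show 2*j+4 = 2*(j+2) from by ring]
    exact coeff_Q_pow_1 θ (j+2)
  have cp2 : coeff (Finsupp.single l (2*j+2) + Finsupp.single m 2) p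
      = ((j+1 : ℕ) + 1 : ℝ) * θ l ^ (j+1) * θ m := by
    rw [hp, show 2*j+2 = 2*(j+1) from by ring, show j+2 = (j+1)+1 from rfl]
    exact coeff_Q_pow_2 hlm θ (j+1)
  -- scalar coefficients
  have sc1 : (∏ i, θ i ^ χ₁ i) = θ l ^ (2*j+2) := by
    rw [Finset.prod_eq_single l (fun i _ hi => by simp [hχ₁, hi])
      (fun h => absurd (Finset.mem_univ l) h)]
    simp [hχ₁]
  have mf1 : mfact χ₁ = (2*j+2).factorial := by
    rw [mfact, Finset.prod_eq_single l (fun i _ hi => by simp [hχ₁, hi])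
      (fun h => absurd (Finset.mem_univ l) h)]
    simp [hχ₁]
  have sc2 : (∏ i, θ i ^ χ₂ i) = θ l ^ (2*j+1) * θ m := by
    rw [Finset.prod_eq_mul_of_mem l m (Finset.mem_univ l) (Finset.mem_univ m) hlm'
      (fun c _ hc => by simp [hχ₂, hc.1, hc.2])]
    simp [hχ₂, hlm]
  have mf2 : mfact χ₂ = (2*j+1).factorial := by
    rw [mfact, Finset.prod_eq_mul_of_mem l m (Finset.mem_univ l) (Finset.mem_univ m) hlm'
      (fun c _ hc => by simp [hχ₂, hc.1, hc.2])]
    simp [hχ₂, hlm]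
  -- the main coefficient computation
  have hcoeff : coeff T R
      = θ l ^ (j+2) * ((2*(j+2) : ℕ) - θ l * θ m * (2*(j+2) : ℕ)) := by
    rw [hR, coeff_sum, Finset.sum_eq_add_of_mem χ₁ χ₂ hmem1 hmem2 hne12 hvanish]
    beta_reduce
    rw [coeff_term, coeff_term]
    simp only [ef1, ef2, ef3, ef4]
    simp only [toF_pair hlm, toF_ite hlm]
    rw [if_pos cond_a, if_pos cond_b, if_neg cond_c]
    rw [sub_a, sub_b, prod1, prod2, prod3, exp1, exp2, exp3, cp1, cp2]
    rw [sc1, mf1, sc2, mf2, if_pos cond_a]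
    have q1 : θ l ^ (2*j+2) = 1 := by
      rw [show 2*j+2 = 2*(j+1) from by ring, pow_mul, hl2, one_pow]
    have q2 : θ l ^ (2*j+1) = θ l := by
      rw [pow_succ, pow_mul, hl2, one_pow, one_mul]
    have q3 : θ l ^ (j+2) = θ l ^ (j+1) * θ l := pow_succ _ _
    have hn1 : (2*j+4).descFactorial (2*j+3)
        = (2*j+4)*((2*j+3)*((2*j+2)*(2*j+1).factorial)) := by
      rw [show 2*j+4 = (2*j+3)+1 from by omega, desc_pred (2*j+3), Nat.factorial_succ,
        show 2*j+3 = (2*j+2)+1 from by omega, Nat.factorial_succ,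
        show 2*j+2 = (2*j+1)+1 from by omega, Nat.factorial_succ]
    have hn2 : (2*j+2).descFactorial (2*j+1) = (2*j+2)*(2*j+1).factorial := by
      rw [show 2*j+2 = (2*j+1)+1 from by omega, desc_pred (2*j+1), Nat.factorial_succ]
    have hn3 : (2*j+2).factorial = (2*j+2)*(2*j+1).factorial := by
      rw [show 2*j+2 = (2*j+1)+1 from by omega, Nat.factorial_succ]
    have hx : (((2*j+1).factorial : ℕ) : ℝ) ≠ 0 := by
      exact_mod_cast Nat.factorial_ne_zero _
    rw [q1, q2, q3, hn1, hn2, hn3]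
    push_cast
    rcases hθ l with hl | hl <;> rcases hθ m with hm | hm
    · exact absurd (hl.trans hm.symm) hθlm
    · rw [hl, hm]
      field_simp
      ring
    · rw [hl, hm]
      field_simp
      ring
    · exact absurd (hl.trans hm.symm) hθlm
  constructor
  · rw [show 2*(j+2) - 1 = 2*j+3 from by omega]
    exact_mod_cast hcoeff
  · intro h0
    rw [h0, coeff_zero] at hcoeff
    have hab : θ l * θ m = -1 := by
      rcases hθ l with hl | hl <;> rcases hθ m with hm | hm
      · exact absurd (hl.trans hm.symm) hθlm
      · rw [hl, hm]; norm_num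
      · rw [hl, hm]; norm_num
      · exact absurd (hl.trans hm.symm) hθlm
    rw [hab] at hcoeff
    have h1 : θ l ^ (j+2) ≠ 0 := pow_ne_zero _ hlne
    have h2 : ((2*(j+2) : ℕ) : ℝ) - (-1) * ((2*(j+2) : ℕ) : ℝ) ≠ 0 := by
      push_cast
      ring_nf
      positivity
    exact (mul_ne_zero h1 h2) hcoeff.symm
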